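/- arXiv:1806.05934 — 2 statements merged into one kernel-verified Lean document; each statement's English description precedes it below -/
import Mathlib

section
/- Define for u, v smooth functions on Ω ⊂ ℝ^d, L u = Δu + k²u and M u = x·∇u − ikβu + ((d−1)/2)u with β ∈ ℝ, k > 0. Then the pointwise (Morawetz–Ludwig) identity holds: conj(Mv)·Lu + Mu·conj(Lv) = ∇·[ conj(Mv)∇u + Mu·conj(∇v) + x(k²u·conj(v) − ∇u·conj(∇v)) ] − ∇u·conj(∇v) − k²u·conj(v). -/
open Complex

/-- `i`-th partial derivative of a complex-valued function on `ℝ^d`. -/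
noncomputable def pd {d : ℕ} (i : Fin d) (f : EuclideanSpace ℝ (Fin d) → ℂ)
    (x : EuclideanSpace ℝ (Fin d)) : ℂ :=
  fderiv ℝ f x (EuclideanSpace.single i 1)

/-- Laplacian of a complex-valued function on `ℝ^d`. -/
noncomputable def lap {d : ℕ} (f : EuclideanSpace ℝ (Fin d) → ℂ)
    (x : EuclideanSpace ℝ (Fin d)) : ℂ :=
  ∑ i : Fin d, pd i (pd i f) x

/-- The Helmholtz operator `L u = Δu + k²u`. -/
noncomputable def Lop {d : ℕ} (k : ℝ) (f : EuclideanSpace ℝ (Fin d) → ℂ)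
    (x : EuclideanSpace ℝ (Fin d)) : ℂ :=
  lap f x + (k : ℂ) ^ 2 * f x

/-- The Morawetz multiplier `M u = x·∇u - ikβu + ((d-1)/2) u`. -/
noncomputable def Mop {d : ℕ} (k β : ℝ) (f : EuclideanSpace ℝ (Fin d) → ℂ)
    (x : EuclideanSpace ℝ (Fin d)) : ℂ :=
  (∑ i : Fin d, (x i : ℂ) * pd i f x) - Complex.I * (k : ℂ) * (β : ℂ) * f x
    + (((d : ℂ) - 1) / 2) * f x

/-- The Morawetz–Ludwig vector field
`F = conj(Mv)∇u + Mu conj(∇v) + x (k² u conj v - ∇u·conj(∇v))` (its `i`-th component). -/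
noncomputable def MorawetzF {d : ℕ} (k β : ℝ) (u v : EuclideanSpace ℝ (Fin d) → ℂ)
    (i : Fin d) (x : EuclideanSpace ℝ (Fin d)) : ℂ :=
  (starRingEnd ℂ) (Mop k β v x) * pd i u x + Mop k β u x * (starRingEnd ℂ) (pd i v x)
    + (x i : ℂ) * ((k : ℂ) ^ 2 * u x * (starRingEnd ℂ) (v x)
        - ∑ j : Fin d, pd j u x * (starRingEnd ℂ) (pd j v x))

section
variable {d : ℕ} {x : EuclideanSpace ℝ (Fin d)} {f g : EuclideanSpace ℝ (Fin d) → ℂ}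

lemma pd_add (i : Fin d) (hf : DifferentiableAt ℝ f x) (hg : DifferentiableAt ℝ g x) :
    pd i (fun y => f y + g y) x = pd i f x + pd i g x := by
  simp [pd, fderiv_fun_add hf hg]

lemma pd_sub (i : Fin d) (hf : DifferentiableAt ℝ f x) (hg : DifferentiableAt ℝ g x) :
    pd i (fun y => f y - g y) x = pd i f x - pd i g x := by
  simp [pd, fderiv_fun_sub hf hg]

lemma pd_mul (i : Fin d) (hf : DifferentiableAt ℝ f x) (hg : DifferentiableAt ℝ g x) :
    pd i (fun y => f y * g y) x = pd i f x * g x + f x * pd i g x := by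
  simp [pd, fderiv_fun_mul hf hg]; ring

lemma pd_const_mul (i : Fin d) (c : ℂ) (hf : DifferentiableAt ℝ f x) :
    pd i (fun y => c * f y) x = c * pd i f x := by
  simp [pd, fderiv_const_mul hf]

lemma pd_conj (i : Fin d) :
    pd i (fun y => (starRingEnd ℂ) (f y)) x = (starRingEnd ℂ) (pd i f x) := by
  have : (fun y => (starRingEnd ℂ) (f y)) = (Complex.conjCLE : ℂ ≃L[ℝ] ℂ) ∘ f := rfl
  rw [pd, this, ContinuousLinearEquiv.comp_fderiv]
  rfl

lemma pd_sum (i : Fin d) {ι : Type*} (s : Finset ι) (F : ι → EuclideanSpace ℝ (Fin d) → ℂ)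
    (hF : ∀ j ∈ s, DifferentiableAt ℝ (F j) x) :
    pd i (fun y => ∑ j ∈ s, F j y) x = ∑ j ∈ s, pd i (F j) x := by
  simp [pd, fderiv_fun_sum hF]

lemma pd_coord (i j : Fin d) :
    pd i (fun y => ((y j : ℝ) : ℂ)) x = if j = i then 1 else 0 := by
  have h : (fun y : EuclideanSpace ℝ (Fin d) => ((y j : ℝ) : ℂ))
      = ⇑(Complex.ofRealCLM.comp (EuclideanSpace.proj j : EuclideanSpace ℝ (Fin d) →L[ℝ] ℝ)) := rfl
  rw [pd, h, ContinuousLinearMap.fderiv]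
  simp [EuclideanSpace.single_apply]
  split <;> simp

lemma diff_coord (j : Fin d) :
    DifferentiableAt ℝ (fun y : EuclideanSpace ℝ (Fin d) => ((y j : ℝ) : ℂ)) x :=
  (Complex.ofRealCLM.comp (EuclideanSpace.proj j : EuclideanSpace ℝ (Fin d) →L[ℝ] ℝ)).differentiableAt

lemma diff_conj (hf : DifferentiableAt ℝ f x) :
    DifferentiableAt ℝ (fun y => (starRingEnd ℂ) (f y)) x :=
  (Complex.conjCLE : ℂ ≃L[ℝ] ℂ).differentiableAt.comp x hf

lemma diff_pd (j : Fin d) (hf : ContDiffAt ℝ 2 f x) :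
    DifferentiableAt ℝ (pd j f) x := by
  have hd : DifferentiableAt ℝ (fderiv ℝ f) x :=
    (hf.fderiv_right (m := 1) le_rfl).differentiableAt one_ne_zero
  exact hd.clm_apply (differentiableAt_const _)

lemma pd_pd_eq (i j : Fin d) (hf : ContDiffAt ℝ 2 f x) :
    pd i (pd j f) x
      = fderiv ℝ (fderiv ℝ f) x (EuclideanSpace.single i 1) (EuclideanSpace.single j 1) := by
  have hd : DifferentiableAt ℝ (fderiv ℝ f) x :=
    (hf.fderiv_right (m := 1) le_rfl).differentiableAt one_ne_zero
  rw [pd, show pd j f = fun y => (fderiv ℝ f y) (EuclideanSpace.single j 1) from rfl,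
    fderiv_clm_apply hd (differentiableAt_const _)]
  simp

lemma pd_pd_symm (i j : Fin d) (hf : ContDiffAt ℝ 2 f x) :
    pd i (pd j f) x = pd j (pd i f) x := by
  rw [pd_pd_eq i j hf, pd_pd_eq j i hf]
  exact hf.isSymmSndFDerivAt (by simp) _ _

lemma diff_Msum (hf : ContDiffAt ℝ 2 f x) :
    DifferentiableAt ℝ (fun y => ∑ j : Fin d, ((y j : ℝ) : ℂ) * pd j f y) x :=
  DifferentiableAt.fun_sum fun j _ => (diff_coord j).mul (diff_pd j hf)

lemma diff_Mop (k β : ℝ) (hf : ContDiffAt ℝ 2 f x) :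
    DifferentiableAt ℝ (Mop k β f) x := by
  have h1 : DifferentiableAt ℝ f x := hf.differentiableAt two_ne_zero
  exact ((diff_Msum hf).sub ((differentiableAt_const _).mul h1)).add
    ((differentiableAt_const _).mul h1)

lemma pd_Mop (i : Fin d) (k β : ℝ) (hf : ContDiffAt ℝ 2 f x) :
    pd i (Mop k β f) x
      = pd i f x + (∑ j : Fin d, ((x j : ℝ) : ℂ) * pd i (pd j f) x)
        - Complex.I * (k : ℂ) * (β : ℂ) * pd i f x
        + (((d : ℂ) - 1) / 2) * pd i f x := by
  have h1 : DifferentiableAt ℝ f x := hf.differentiableAt two_ne_zero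
  have hs := diff_Msum hf
  have h2 : DifferentiableAt ℝ (fun y => Complex.I * (k : ℂ) * (β : ℂ) * f y) x :=
    (differentiableAt_const _).mul h1
  have hMop : Mop k β f = fun y =>
      ((fun y => ∑ j : Fin d, ((y j : ℝ) : ℂ) * pd j f y) y
        - (fun y => Complex.I * (k : ℂ) * (β : ℂ) * f y) y)
      + (fun y => (((d : ℂ) - 1) / 2) * f y) y := rfl
  rw [hMop, pd_add i (hs.fun_sub h2) ((differentiableAt_const _).fun_mul h1),
    pd_sub i hs h2,
    pd_sum i Finset.univ (fun j => fun y => ((y j : ℝ) : ℂ) * pd j f y)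
      (fun j _ => (diff_coord j).fun_mul (diff_pd j hf))]
  have hterm : ∀ j : Fin d, pd i (fun y => ((y j : ℝ) : ℂ) * pd j f y) x
      = (if j = i then 1 else 0) * pd j f x + ((x j : ℝ) : ℂ) * pd i (pd j f) x := by
    intro j
    rw [pd_mul i (diff_coord j) (diff_pd j hf), pd_coord]
  rw [Finset.sum_congr rfl fun j _ => hterm j, Finset.sum_add_distrib]
  have : (∑ j : Fin d, (if j = i then (1:ℂ) else 0) * pd j f x) = pd i f x := by
    simp [Finset.sum_ite_eq]
  rw [this,
    pd_const_mul i (Complex.I * (k : ℂ) * (β : ℂ)) h1,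
    pd_const_mul i (((d : ℂ) - 1) / 2) h1]


variable {u v : EuclideanSpace ℝ (Fin d) → ℂ}

lemma diff_G (k : ℝ) (hu : ContDiffAt ℝ 2 u x) (hv : ContDiffAt ℝ 2 v x) :
    DifferentiableAt ℝ (fun y => (k : ℂ) ^ 2 * u y * (starRingEnd ℂ) (v y)
      - ∑ j : Fin d, pd j u y * (starRingEnd ℂ) (pd j v y)) x := by
  have hu1 : DifferentiableAt ℝ u x := hu.differentiableAt two_ne_zero
  have hv1 : DifferentiableAt ℝ v x := hv.differentiableAt two_ne_zero
  exact (((differentiableAt_const _).mul hu1).mul (diff_conj hv1)).sub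
    (DifferentiableAt.fun_sum fun j _ => (diff_pd j hu).mul (diff_conj (diff_pd j hv)))

lemma pd_G (i : Fin d) (k : ℝ) (hu : ContDiffAt ℝ 2 u x) (hv : ContDiffAt ℝ 2 v x) :
    pd i (fun y => (k : ℂ) ^ 2 * u y * (starRingEnd ℂ) (v y)
      - ∑ j : Fin d, pd j u y * (starRingEnd ℂ) (pd j v y)) x
    = (k : ℂ) ^ 2 * (pd i u x * (starRingEnd ℂ) (v x) + u x * (starRingEnd ℂ) (pd i v x))
      - ∑ j : Fin d, (pd i (pd j u) x * (starRingEnd ℂ) (pd j v x)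
          + pd j u x * (starRingEnd ℂ) (pd i (pd j v) x)) := by
  have hu1 : DifferentiableAt ℝ u x := hu.differentiableAt two_ne_zero
  have hv1 : DifferentiableAt ℝ v x := hv.differentiableAt two_ne_zero
  have e1 : (fun y => (k : ℂ) ^ 2 * u y * (starRingEnd ℂ) (v y)
      - ∑ j : Fin d, pd j u y * (starRingEnd ℂ) (pd j v y))
    = fun y => ((fun y => (k : ℂ) ^ 2 * u y) y * (fun y => (starRingEnd ℂ) (v y)) y)
      - (fun y => ∑ j : Fin d, (fun j y => pd j u y * (starRingEnd ℂ) (pd j v y)) j y) y := rfl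
  rw [e1, pd_sub i (((differentiableAt_const _).fun_mul hu1).fun_mul (diff_conj hv1))
      (DifferentiableAt.fun_sum fun j _ => (diff_pd j hu).fun_mul (diff_conj (diff_pd j hv))),
    pd_mul i ((differentiableAt_const _).fun_mul hu1) (diff_conj hv1),
    pd_const_mul i _ hu1, pd_conj,
    pd_sum i Finset.univ _ (fun j _ => (diff_pd j hu).fun_mul (diff_conj (diff_pd j hv)))]
  rw [Finset.sum_congr rfl (fun j _ =>
    by rw [pd_mul i (diff_pd j hu) (diff_conj (diff_pd j hv)), pd_conj])]
  ring


lemma pd_MF (i : Fin d) (k β : ℝ) (hu : ContDiffAt ℝ 2 u x) (hv : ContDiffAt ℝ 2 v x) :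
    fderiv ℝ (MorawetzF k β u v i) x (EuclideanSpace.single i 1)
    = ((starRingEnd ℂ) (pd i v x)
          + (∑ j : Fin d, ((x j : ℝ) : ℂ) * (starRingEnd ℂ) (pd i (pd j v) x))
          + Complex.I * (k : ℂ) * (β : ℂ) * (starRingEnd ℂ) (pd i v x)
          + (((d : ℂ) - 1) / 2) * (starRingEnd ℂ) (pd i v x)) * pd i u x
      + (starRingEnd ℂ) (Mop k β v x) * pd i (pd i u) x
      + (pd i u x + (∑ j : Fin d, ((x j : ℝ) : ℂ) * pd i (pd j u) x)
          - Complex.I * (k : ℂ) * (β : ℂ) * pd i u x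
          + (((d : ℂ) - 1) / 2) * pd i u x) * (starRingEnd ℂ) (pd i v x)
      + Mop k β u x * (starRingEnd ℂ) (pd i (pd i v) x)
      + ((k : ℂ) ^ 2 * u x * (starRingEnd ℂ) (v x)
          - ∑ j : Fin d, pd j u x * (starRingEnd ℂ) (pd j v x))
      + ((x i : ℝ) : ℂ) * ((k : ℂ) ^ 2
            * (pd i u x * (starRingEnd ℂ) (v x) + u x * (starRingEnd ℂ) (pd i v x))
          - ∑ j : Fin d, (pd i (pd j u) x * (starRingEnd ℂ) (pd j v x)
              + pd j u x * (starRingEnd ℂ) (pd i (pd j v) x))) := by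
  have hu1 : DifferentiableAt ℝ u x := hu.differentiableAt two_ne_zero
  have hv1 : DifferentiableAt ℝ v x := hv.differentiableAt two_ne_zero
  have dG := diff_G (x := x) (u := u) (v := v) k hu hv
  have dMv : DifferentiableAt ℝ (fun y => (starRingEnd ℂ) (Mop k β v y)) x :=
    diff_conj (diff_Mop k β hv)
  have dMu := diff_Mop (x := x) k β hu
  have dQ : DifferentiableAt ℝ (fun y => (starRingEnd ℂ) (pd i v y)) x :=
    diff_conj (diff_pd i hv)
  have e : MorawetzF k β u v i = fun y =>
      ((fun y => (starRingEnd ℂ) (Mop k β v y)) y * pd i u y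
        + Mop k β u y * (fun y => (starRingEnd ℂ) (pd i v y)) y)
      + (fun y => ((y i : ℝ) : ℂ)) y
          * (fun y => (k : ℂ) ^ 2 * u y * (starRingEnd ℂ) (v y)
              - ∑ j : Fin d, pd j u y * (starRingEnd ℂ) (pd j v y)) y := rfl
  rw [show fderiv ℝ (MorawetzF k β u v i) x (EuclideanSpace.single i 1)
      = pd i (MorawetzF k β u v i) x from rfl, e,
    pd_add i ((dMv.fun_mul (diff_pd i hu)).fun_add (dMu.fun_mul dQ)) ((diff_coord i).fun_mul dG),
    pd_add i (dMv.fun_mul (diff_pd i hu)) (dMu.fun_mul dQ),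
    pd_mul i dMv (diff_pd i hu), pd_mul i dMu dQ, pd_mul i (diff_coord i) dG,
    pd_conj, pd_conj, pd_coord, pd_Mop i k β hu, pd_Mop i k β hv,
    pd_G i k hu hv]
  simp only [map_add, map_sub, map_mul, map_sum, map_div₀, Complex.conj_ofReal, Complex.conj_I,
    map_natCast, map_one, map_ofNat, if_pos rfl, if_true]
  ring

end

open Finset in
lemma key_algebra (dd : ℕ) (K C J a b : ℂ) (X P Q : Fin dd → ℂ) (U V : Fin dd → Fin dd → ℂ)
    (hU : ∀ i j, U i j = U j i) (hV : ∀ i j, V i j = V j i) (hC : (dd : ℂ) = 2 * C + 1) :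
    ((∑ i, X i * Q i) + J * b + C * b) * ((∑ i, U i i) + K * a)
      + ((∑ i, X i * P i) - J * a + C * a) * ((∑ i, V i i) + K * b)
    = (∑ i, ((Q i + (∑ j, X j * V i j) + J * Q i + C * Q i) * P i
        + ((∑ i', X i' * Q i') + J * b + C * b) * U i i
        + (P i + (∑ j, X j * U i j) - J * P i + C * P i) * Q i
        + ((∑ i', X i' * P i') - J * a + C * a) * V i i
        + (K * a * b - ∑ j, P j * Q j)
        + X i * (K * (P i * b + a * Q i) - ∑ j, (U i j * Q j + P j * V i j))))
      - (∑ i, P i * Q i) - K * a * b := by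
  -- closed forms for the six sub-sums
  have h1 : (∑ i, (Q i + (∑ j, X j * V i j) + J * Q i + C * Q i) * P i)
      = (∑ i, P i * Q i) + (∑ i, ∑ j, X j * V i j * P i)
        + J * (∑ i, P i * Q i) + C * (∑ i, P i * Q i) := by
    simp only [mul_sum, ← sum_add_distrib]
    refine sum_congr rfl fun i _ => ?_
    rw [add_mul, add_mul, add_mul, sum_mul]
    ring
  have h3 : (∑ i, (P i + (∑ j, X j * U i j) - J * P i + C * P i) * Q i)
      = (∑ i, P i * Q i) + (∑ i, ∑ j, X j * U i j * Q i)
        - J * (∑ i, P i * Q i) + C * (∑ i, P i * Q i) := by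
    simp only [mul_sum, ← sum_add_distrib, ← sum_sub_distrib]
    refine sum_congr rfl fun i _ => ?_
    rw [add_mul, sub_mul, add_mul, sum_mul]
    ring
  have h5 : (∑ _i : Fin dd, (K * a * b - ∑ j, P j * Q j))
      = (dd : ℂ) * (K * a * b - ∑ j, P j * Q j) := by
    rw [sum_const, card_univ, Fintype.card_fin, nsmul_eq_mul]
  have h2 : (∑ i : Fin dd, ((∑ i', X i' * Q i') + J * b + C * b) * U i i)
      = ((∑ i', X i' * Q i') + J * b + C * b) * ∑ i, U i i := by rw [mul_sum]
  have h4 : (∑ i : Fin dd, ((∑ i', X i' * P i') - J * a + C * a) * V i i)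
      = ((∑ i', X i' * P i') - J * a + C * a) * ∑ i, V i i := by rw [mul_sum]
  have h6 : (∑ i, X i * (K * (P i * b + a * Q i) - ((∑ j, U i j * Q j) + (∑ j, P j * V i j))))
      = K * b * (∑ i, X i * P i) + K * a * (∑ i, X i * Q i)
        - (∑ i, ∑ j, X i * (U i j * Q j)) - (∑ i, ∑ j, X i * (P j * V i j)) := by
    rw [mul_sum, mul_sum, ← sum_add_distrib, ← sum_sub_distrib, ← sum_sub_distrib]
    refine sum_congr rfl fun i _ => ?_
    simp only [mul_sub, mul_add, mul_sum]
    ring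
  have sw1 : (∑ i, ∑ j, X j * V i j * P i) = ∑ i, ∑ j, X i * (P j * V i j) := by
    rw [sum_comm]
    exact sum_congr rfl fun i _ => sum_congr rfl fun j _ => by rw [hV j i]; ring
  have sw2 : (∑ i, ∑ j, X j * U i j * Q i) = ∑ i, ∑ j, X i * (U i j * Q j) := by
    rw [sum_comm]
    exact sum_congr rfl fun i _ => sum_congr rfl fun j _ => by rw [hU j i]; ring
  simp only [sum_add_distrib]
  rw [h1, h2, h3, h4, h5, h6, sw1, sw2, hC]
  ring

/-- The pointwise Morawetz–Ludwig identity: for `u, v` twice continuously differentiable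
on an open set `Ω ⊆ ℝ^d`, `k > 0`, `β ∈ ℝ`,
`conj(Mv)·Lu + Mu·conj(Lv) = ∇·F - ∇u·conj(∇v) - k² u conj(v)` pointwise in `Ω`. -/
theorem morawetz_ludwig_identity {d : ℕ} (k β : ℝ) (hk : 0 < k)
    (Ω : Set (EuclideanSpace ℝ (Fin d))) (hΩ : IsOpen Ω)
    (u v : EuclideanSpace ℝ (Fin d) → ℂ)
    (hu : ContDiffOn ℝ 2 u Ω) (hv : ContDiffOn ℝ 2 v Ω) :
    ∀ x ∈ Ω,
      (starRingEnd ℂ) (Mop k β v x) * Lop k u x + Mop k β u x * (starRingEnd ℂ) (Lop k v x)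
        = (∑ i : Fin d, fderiv ℝ (MorawetzF k β u v i) x (EuclideanSpace.single i 1))
          - (∑ i : Fin d, pd i u x * (starRingEnd ℂ) (pd i v x))
          - (k : ℂ) ^ 2 * u x * (starRingEnd ℂ) (v x) := by
  intro x hx
  have hu2 : ContDiffAt ℝ 2 u x := hu.contDiffAt (hΩ.mem_nhds hx)
  have hv2 : ContDiffAt ℝ 2 v x := hv.contDiffAt (hΩ.mem_nhds hx)
  have hMv : (starRingEnd ℂ) (Mop k β v x)
      = (∑ i : Fin d, ((x i : ℝ) : ℂ) * (starRingEnd ℂ) (pd i v x))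
        + Complex.I * (k : ℂ) * (β : ℂ) * (starRingEnd ℂ) (v x)
        + (((d : ℂ) - 1) / 2) * (starRingEnd ℂ) (v x) := by
    simp only [Mop, map_add, map_sub, map_mul, map_sum, map_div₀, Complex.conj_ofReal,
      Complex.conj_I, map_natCast, map_one, map_ofNat]
    ring
  have hMu : Mop k β u x = (∑ i : Fin d, ((x i : ℝ) : ℂ) * pd i u x)
      - Complex.I * (k : ℂ) * (β : ℂ) * u x + (((d : ℂ) - 1) / 2) * u x := rfl
  have hLu : Lop k u x = (∑ i : Fin d, pd i (pd i u) x) + (k : ℂ) ^ 2 * u x := rfl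
  have hLv : (starRingEnd ℂ) (Lop k v x)
      = (∑ i : Fin d, (starRingEnd ℂ) (pd i (pd i v) x))
        + (k : ℂ) ^ 2 * (starRingEnd ℂ) (v x) := by
    simp only [Lop, lap, map_add, map_mul, map_sum, map_pow, Complex.conj_ofReal]
  rw [Finset.sum_congr rfl fun i _ => pd_MF i k β hu2 hv2, hMv, hMu, hLu, hLv]
  exact key_algebra d ((k : ℂ) ^ 2) (((d : ℂ) - 1) / 2) (Complex.I * (k : ℂ) * (β : ℂ))
    (u x) ((starRingEnd ℂ) (v x)) (fun j => ((x j : ℝ) : ℂ)) (fun j => pd j u x)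
    (fun j => (starRingEnd ℂ) (pd j v x)) (fun i j => pd i (pd j u) x)
    (fun i j => (starRingEnd ℂ) (pd i (pd j v) x))
    (fun i j => pd_pd_symm i j hu2) (fun i j => congrArg (starRingEnd ℂ) (pd_pd_symm i j hv2))
    (by ring)
end

section
/- With the norms ‖·‖_{V₁} and ‖·‖_{V₂} as above, if v satisfies Δv + k²v = 0 in Ω, then (1/2)‖v‖²_{V₁} ≤ ‖v‖²_{V₂} ≤ ‖v‖²_{V₁}. -/
/-- If `v` satisfies the homogeneous Helmholtz equation `Δv + k²v = 0` in `Ω`, then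
`(1/2)‖v‖²_{V₁} ≤ ‖v‖²_{V₂} ≤ ‖v‖²_{V₁}`. As in the norm-equivalence statement,
`Dv` and `v` are the elements `Δv` and `v` of `L²(Ω)`, and `g, bn, bt, bm ≥ 0` are
the remaining squared norms appearing in `‖·‖_{V₁}` and `‖·‖_{V₂}`. -/
theorem V1_V2_norm_equivalence_helmholtz {X : Type*} [NormedAddCommGroup X] [NormedSpace ℝ X]
    (k Llen g bn bt bm : ℝ) (hk : 0 < k) (hL : 0 < Llen)
    (hg : 0 ≤ g) (hbn : 0 ≤ bn) (hbt : 0 ≤ bt) (hbm : 0 ≤ bm)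
    (Dv v : X) (hHelm : Dv + (k ^ 2) • v = 0) :
    (1 / 2) *
        ((k ^ 2)⁻¹ * ‖Dv‖ ^ 2 + g + k ^ 2 * ‖v‖ ^ 2 + Llen * (bn + bt + k ^ 2 * bm))
      ≤ ‖Dv + (k ^ 2) • v‖ ^ 2 + g + k ^ 2 * ‖v‖ ^ 2 + Llen * (bn + bt + k ^ 2 * bm) ∧
    ‖Dv + (k ^ 2) • v‖ ^ 2 + g + k ^ 2 * ‖v‖ ^ 2 + Llen * (bn + bt + k ^ 2 * bm)
      ≤ (k ^ 2)⁻¹ * ‖Dv‖ ^ 2 + g + k ^ 2 * ‖v‖ ^ 2 + Llen * (bn + bt + k ^ 2 * bm) := by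
  have hDv : Dv = -((k ^ 2) • v) := eq_neg_of_add_eq_zero_left hHelm
  have hk2 : (0:ℝ) < k ^ 2 := by positivity
  have hnorm : ‖Dv‖ = k ^ 2 * ‖v‖ := by
    rw [hDv, norm_neg, norm_smul, Real.norm_eq_abs, abs_of_pos hk2]
  rw [hHelm, norm_zero, hnorm]
  have h : (k ^ 2)⁻¹ * (k ^ 2 * ‖v‖) ^ 2 = k ^ 2 * ‖v‖ ^ 2 := by
    field_simp
  rw [h]
  have h1 : (0:ℝ) ≤ k ^ 2 * ‖v‖ ^ 2 := by positivity
  have h2 : (0:ℝ) ≤ Llen * (bn + bt + k ^ 2 * bm) :=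
    mul_nonneg hL.le (by nlinarith)
  constructor <;> nlinarith
end
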